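/- arXiv:2510.10399 — 3 statements merged into one kernel-verified Lean document; each statement's English description precedes it below -/
import Mathlib

section
/- Conversely, if a set of arcs on N ∪ {d} (with depot d) forms a single directed Hamiltonian cycle through the depot d and all nodes of N, then there exists an assignment u : N → ℝ≥0 with u(i) ≤ |N| − 1 for all i, satisfying the MTZ inequalities u(i) − u(j) + |N|·z(i,j) ≤ |N| − 1 for all i, j ∈ N. -/
/-- If the arcs `z` form the Hamiltonian cycle `d → v 0 → v 1 → ⋯ → v (n-1) → d`
through depot `d` and all nodes of `N` (`v : Fin n ≃ N` enumerates the route),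
then there are nonnegative position variables `u` with `u i ≤ n - 1` satisfying the
MTZ inequalities `u i - u j + n * z i j ≤ n - 1` for all `i j ∈ N` (depot excluded). -/
theorem hamiltonian_cycle_satisfies_mtz {N : Type*} [Fintype N]
    (n : ℕ) (hn : n = Fintype.card N) (hn1 : 1 ≤ n)
    (v : Fin n ≃ N) (z : N → N → ℕ)
    (hz : ∀ i j : N, z i j = 1 ↔
      ∃ (t : ℕ) (ht : t + 1 < n), v ⟨t, Nat.lt_of_succ_lt ht⟩ = i ∧ v ⟨t + 1, ht⟩ = j)
    (hz01 : ∀ i j, z i j = 0 ∨ z i j = 1) :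
    ∃ u : N → ℝ, (∀ i, 0 ≤ u i) ∧ (∀ i, u i ≤ (n : ℝ) - 1) ∧
      ∀ i j, u i - u j + (n : ℝ) * (z i j : ℝ) ≤ (n : ℝ) - 1 := by
  refine ⟨fun i => ((v.symm i : Fin n) : ℕ), fun i => by positivity, ?_, ?_⟩
  · intro i
    have h := (v.symm i).2
    have : ((v.symm i : Fin n) : ℕ) + 1 ≤ n := h
    have := Nat.cast_le (α := ℝ) |>.2 this
    push_cast at this
    linarith
  · intro i j
    rcases hz01 i j with h0 | h1
    · rw [h0]
      have hi : ((v.symm i : Fin n) : ℕ) + 1 ≤ n := (v.symm i).2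
      have hj : (0 : ℕ) ≤ ((v.symm j : Fin n) : ℕ) := Nat.zero_le _
      have hi' := Nat.cast_le (α := ℝ) |>.2 hi
      push_cast at hi' ⊢
      have : (0:ℝ) ≤ ((v.symm j : Fin n) : ℕ) := Nat.cast_nonneg _
      linarith
    · rw [h1]
      obtain ⟨t, ht, hti, htj⟩ := (hz i j).1 h1
      have hi : v.symm i = ⟨t, Nat.lt_of_succ_lt ht⟩ := by rw [← hti]; simp
      have hj : v.symm j = ⟨t + 1, ht⟩ := by rw [← htj]; simp
      simp only [hi, hj, Nat.cast_one, mul_one]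
      have htn : (t:ℝ) + 1 < n := by exact_mod_cast ht
      push_cast
      linarith
end

section
/- Suppose z : N ∪ D × N ∪ D → {0,1} satisfies flow conservation at every node j ∈ N (in-degree equals out-degree under z), every node i ∈ N has exactly one outgoing and one incoming arc, and there are no subtours contained entirely in N. Then every node of N lies on a directed path that starts and ends at depot nodes in D. -/
lemma cycle_of_iterates {V : Type*} [Fintype V] (f : V → V) (N : Finset V) (x : V)
    (H : ∀ n, f^[n] x ∈ N) :
    ∃ k, 1 ≤ k ∧ ∃ w : ZMod k → V, (∀ t, w t ∈ N) ∧ ∀ t, w (t + 1) = f (w t) := by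
  have key : ∀ a b : ℕ, a < b → f^[a] x = f^[b] x →
      ∃ k, 1 ≤ k ∧ ∃ w : ZMod k → V, (∀ t, w t ∈ N) ∧ ∀ t, w (t + 1) = f (w t) := by
    intro a b hab heq
    set k := b - a with hk
    have hk1 : 1 ≤ k := by omega
    have hper0 : f^[a + k] x = f^[a] x := by
      rw [show a + k = b by omega]; exact heq.symm
    have per : ∀ n, f^[a + n] x = f^[a + n % k] x := by
      intro n
      induction n using Nat.strong_induction_on with
      | _ n ih =>
        rcases Nat.lt_or_ge n k with h | h
        · rw [Nat.mod_eq_of_lt h]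
        · have h1 : f^[a + n] x = f^[a + (n - k)] x := by
            have h2 : a + n = (n - k) + (a + k) := by omega
            rw [h2, Function.iterate_add_apply, hper0, ← Function.iterate_add_apply]
            congr 1; omega
          rw [h1, ih (n - k) (by omega), Nat.mod_eq_sub_mod h]
    haveI : NeZero k := ⟨by omega⟩
    refine ⟨k, hk1, fun t => f^[a + t.val] x, fun t => H _, fun t => ?_⟩
    have h2 : t.val < k := ZMod.val_lt t
    have hval : (t + 1).val = (t.val + 1) % k := by
      rw [ZMod.val_add]
      have h1 : (1 : ZMod k).val = 1 % k := ZMod.val_one_eq_one_mod k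
      rw [h1, Nat.add_mod t.val 1 k, Nat.mod_eq_of_lt h2]
    show f^[a + (t+1).val] x = f (f^[a + t.val] x)
    rw [hval, ← per (t.val + 1), show a + (t.val + 1) = (a + t.val) + 1 by omega,
      Function.iterate_succ_apply']
  obtain ⟨a, b, hab, heq⟩ := Finite.exists_ne_map_eq_of_infinite (fun n : ℕ => f^[n] x)
  rcases Nat.lt_or_ge a b with h | h
  · exact key a b h heq
  · exact key b a (by omega) heq.symm

/-- If `z` satisfies flow conservation at every damaged node, every damaged node has
exactly one incoming and one outgoing arc, and there is no directed cycle lying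
entirely within the damaged-node set `N`, then every damaged node lies on a directed
path that starts and ends at depot nodes in `D`. -/
theorem damaged_nodes_on_depot_paths {V : Type*} [Fintype V] [DecidableEq V]
    (N D : Finset V) (hdisj : Disjoint N D) (hcover : N ∪ D = Finset.univ)
    (z : V → V → ℕ) (hz01 : ∀ i j, z i j = 0 ∨ z i j = 1)
    (hflow : ∀ j ∈ N, (∑ i, z i j) = ∑ i, z j i)
    (hout : ∀ i ∈ N, (∑ j, z i j) = 1)
    (hin : ∀ i ∈ N, (∑ j, z j i) = 1)
    (hnosub : ∀ (k : ℕ), 1 ≤ k → ∀ w : ZMod k → V, (∀ t, w t ∈ N) →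
      ¬ (∀ t : ZMod k, z (w t) (w (t + 1)) = 1)) :
    ∀ x ∈ N, ∃ (m : ℕ) (p : Fin (m + 2) → V),
      p 0 ∈ D ∧ p (Fin.last (m + 1)) ∈ D ∧
      (∀ t : Fin (m + 2), t ≠ 0 → t ≠ Fin.last (m + 1) → p t ∈ N) ∧
      (∃ t : Fin (m + 2), t ≠ 0 ∧ t ≠ Fin.last (m + 1) ∧ p t = x) ∧
      (∀ t : Fin (m + 1), z (p t.castSucc) (p t.succ) = 1) := by
  classical
  intro x hx
  -- choose a successor and predecessor for every node of N
  have hfe : ∀ i, ∃ j, i ∈ N → z i j = 1 := by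
    intro i
    by_cases hi : i ∈ N
    · have h1 := hout i hi
      by_contra hc
      push_neg at hc
      have h0 : (∑ j, z i j) = 0 := Finset.sum_eq_zero (fun j _ => by
        rcases hz01 i j with h | h
        · exact h
        · exact absurd h (hc j).2)
      omega
    · exact ⟨i, fun h => absurd h hi⟩
  have hge : ∀ i, ∃ j, i ∈ N → z j i = 1 := by
    intro i
    by_cases hi : i ∈ N
    · have h1 := hin i hi
      by_contra hc
      push_neg at hc
      have h0 : (∑ j, z j i) = 0 := Finset.sum_eq_zero (fun j _ => by
        rcases hz01 j i with h | h
        · exact h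
        · exact absurd h (hc j).2)
      omega
    · exact ⟨i, fun h => absurd h hi⟩
  choose f hf using hfe
  choose g hg using hge
  have hD : ∀ v, v ∉ N → v ∈ D := by
    intro v hv
    have hmem : v ∈ N ∪ D := hcover ▸ Finset.mem_univ v
    rcases Finset.mem_union.mp hmem with h | h
    · exact absurd h hv
    · exact h
  -- forward escape
  have hAf : ∃ n, f^[n] x ∉ N := by
    by_contra hc; push_neg at hc
    obtain ⟨k, hk, w, hwN, hws⟩ := cycle_of_iterates f N x hc
    exact hnosub k hk w hwN (fun t => by rw [hws t]; exact hf (w t) (hwN t))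
  -- backward escape
  have hAg : ∃ n, g^[n] x ∉ N := by
    by_contra hc; push_neg at hc
    obtain ⟨k, hk, w, hwN, hws⟩ := cycle_of_iterates g N x hc
    refine hnosub k hk (fun t => w (-t)) (fun t => hwN _) (fun t => ?_)
    have h1 : w (-t) = g (w (-(t+1))) := by
      have h2 := hws (-(t+1))
      rw [show -(t+1) + 1 = -t by ring] at h2
      exact h2
    show z (w (-t)) (w (-(t+1))) = 1
    rw [h1]
    exact hg _ (hwN _)
  set a := Nat.find hAf with ha
  set b := Nat.find hAg with hb
  have haD : f^[a] x ∈ D := hD _ (Nat.find_spec hAf)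
  have hbD : g^[b] x ∈ D := hD _ (Nat.find_spec hAg)
  have haN : ∀ n < a, f^[n] x ∈ N := fun n hn => not_not.mp (Nat.find_min hAf hn)
  have hbN : ∀ n < b, g^[n] x ∈ N := fun n hn => not_not.mp (Nat.find_min hAg hn)
  have ha1 : 1 ≤ a := by
    by_contra h
    have h0 : a = 0 := by omega
    have := Nat.find_spec hAf
    rw [← ha, h0] at this
    exact this hx
  have hb1 : 1 ≤ b := by
    by_contra h
    have h0 : b = 0 := by omega
    have := Nat.find_spec hAg
    rw [← hb, h0] at this
    exact this hx
  have hm : a + b - 1 + 2 = a + b + 1 := by omega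
  refine ⟨a + b - 1, fun t => if t.val ≤ b then g^[b - t.val] x else f^[t.val - b] x,
    ?_, ?_, ?_, ?_, ?_⟩
  · show (if (0 : Fin (a+b-1+2)).val ≤ b then g^[b - (0 : Fin (a+b-1+2)).val] x
      else f^[(0 : Fin (a+b-1+2)).val - b] x) ∈ D
    rw [Fin.val_zero, if_pos (Nat.zero_le b), Nat.sub_zero]
    exact hbD
  · show (if (Fin.last (a+b-1+1)).val ≤ b then g^[b - (Fin.last (a+b-1+1)).val] x
      else f^[(Fin.last (a+b-1+1)).val - b] x) ∈ D
    rw [Fin.val_last, if_neg (by omega), show a + b - 1 + 1 - b = a by omega]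
    exact haD
  · intro t ht0 htl
    have h0 : t.val ≠ 0 := by
      intro h
      exact ht0 (Fin.ext (by simpa using h))
    have hl : t.val ≠ a + b - 1 + 1 := by
      intro h
      exact htl (Fin.ext (by simpa [Fin.val_last] using h))
    have htlt : t.val < a + b - 1 + 2 := t.isLt
    show (if t.val ≤ b then g^[b - t.val] x else f^[t.val - b] x) ∈ N
    split_ifs with h
    · exact hbN _ (by omega)
    · exact haN _ (by omega)
  · refine ⟨⟨b, by omega⟩, ?_, ?_, ?_⟩
    · intro h
      have := congrArg Fin.val h
      simp at this
      omega
    · intro h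
      have := congrArg Fin.val h
      rw [Fin.val_last] at this
      simp at this
      omega
    · show (if b ≤ b then g^[b - b] x else f^[b - b] x) = x
      rw [if_pos le_rfl, Nat.sub_self]
      rfl
  · intro t
    have htlt : t.val < a + b - 1 + 1 := t.isLt
    show z (if (t.castSucc).val ≤ b then g^[b - (t.castSucc).val] x
        else f^[(t.castSucc).val - b] x)
      (if (t.succ).val ≤ b then g^[b - (t.succ).val] x else f^[(t.succ).val - b] x) = 1
    rw [Fin.coe_castSucc, Fin.val_succ]
    by_cases hcase : t.val + 1 ≤ b
    · rw [if_pos (by omega), if_pos hcase,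
        show b - t.val = (b - (t.val + 1)) + 1 by omega, Function.iterate_succ_apply']
      exact hg _ (hbN _ (by omega))
    · have hpc : (if t.val ≤ b then g^[b - t.val] x else f^[t.val - b] x) = f^[t.val - b] x := by
        split_ifs with h
        · have hv : t.val = b := by omega
          rw [hv, Nat.sub_self]
          simp
        · rfl
      rw [hpc, if_neg (by omega),
        show t.val + 1 - b = (t.val - b) + 1 by omega, Function.iterate_succ_apply']
      exact hf _ (haN _ (by omega))
end

section
/- Under the degree constraints (each node has unique successor and predecessor) together with the MTZ constraints on N, every directed cycle of the successor permutation contains at least one depot node from D. -/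
/-- Under the degree constraints (the arcs `z` form a permutation `σ` of `V = N ⊕ D`)
together with the MTZ constraints on `N`, every directed cycle of the successor
permutation contains at least one depot node: for every starting point, some iterate
of `σ` lands in `D`. -/
theorem every_cycle_meets_depot {N D : Type*} [Fintype N] [Fintype D] [Nonempty D]
    (σ : Equiv.Perm (N ⊕ D)) (z : (N ⊕ D) → (N ⊕ D) → ℕ)
    (hz : ∀ i j, z i j = 1 ↔ σ i = j)
    (u : N → ℝ) (hu : ∀ i, 0 ≤ u i)
    (hmtz : ∀ i j : N, u i - u j + (Fintype.card N : ℝ) * (z (Sum.inl i) (Sum.inl j) : ℝ)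
      ≤ (Fintype.card N : ℝ) - 1) :
    ∀ i : N ⊕ D, ∃ (k : ℕ) (d : D), (⇑σ)^[k] i = Sum.inr d := by
  intro i
  by_contra h
  push_neg at h
  -- every iterate lies in N
  have hN : ∀ k : ℕ, ∃ n : N, (⇑σ)^[k] i = Sum.inl n := by
    intro k
    cases hk : (⇑σ)^[k] i with
    | inl n => exact ⟨n, rfl⟩
    | inr d => exact absurd hk (h k d)
  choose g hg using hN
  -- step inequality
  have hstep : ∀ k : ℕ, u (g k) + 1 ≤ u (g (k + 1)) := by
    intro k
    have hσ : σ (Sum.inl (g k)) = Sum.inl (g (k + 1)) := by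
      rw [← hg k, ← hg (k + 1), Function.iterate_succ_apply']
    have hz1 : z (Sum.inl (g k)) (Sum.inl (g (k + 1))) = 1 := (hz _ _).mpr hσ
    have := hmtz (g k) (g (k + 1))
    rw [hz1] at this
    push_cast at this
    linarith
  have hmono : ∀ m k : ℕ, u (g k) + m ≤ u (g (k + m)) := by
    intro m
    induction m with
    | zero => intro k; simp
    | succ n ih =>
      intro k
      have h1 := ih k
      have h2 := hstep (k + n)
      push_cast
      push_cast at h1
      have : k + (n + 1) = k + n + 1 := by ring
      rw [this]
      linarith
  -- pigeonhole: g is not injective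
  have : ¬ Function.Injective g := by
    intro hinj
    exact (Finite.of_injective g hinj).false
  obtain ⟨a, b, hab, hne⟩ : ∃ a b, g a = g b ∧ a ≠ b := by
    simp only [Function.Injective, not_forall] at this
    obtain ⟨a, b, hab, hne⟩ := this
    exact ⟨a, b, hab, hne⟩
  wlog hlt : a < b generalizing a b
  · exact this b a hab.symm hne.symm (hne.lt_or_gt.resolve_left hlt)
  have h1 := hmono (b - a) a
  rw [Nat.add_sub_cancel' hlt.le, ← hab] at h1
  have : (1 : ℝ) ≤ (b - a : ℕ) := by
    have : 1 ≤ b - a := Nat.le_sub_of_add_le (by omega)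
    exact_mod_cast this
  linarith
end
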